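/- With t as above, the probability that there exist a p-subset X of E and a (k−p)-subset Y of E \ X such that no F_i contains X and is disjoint from Y is at most 1/n. -/

import Mathlib

open MeasureTheory

open scoped ENNReal


lemma bern_true (q : NNReal) (h : q ≤ 1) :
    (PMF.bernoulli q h).toMeasure {true} = q := by
  rw [PMF.toMeasure_apply_singleton _ _ (measurableSet_singleton _), PMF.bernoulli_apply]
  simp

lemma bern_false (q : NNReal) (h : q ≤ 1) :
    (PMF.bernoulli q h).toMeasure {false} = 1 - (q : ℝ≥0∞) := by
  rw [PMF.toMeasure_apply_singleton _ _ (measurableSet_singleton _), PMF.bernoulli_apply]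
  simp [ENNReal.coe_sub]

lemma good_measure {E : Type*} [Fintype E] [DecidableEq E] (q : NNReal) (h : q ≤ 1)
    (X Y : Finset E) (hXY : Disjoint X Y) :
    Measure.pi (fun _ : E => (PMF.bernoulli q h).toMeasure)
      {g : E → Bool | (∀ x ∈ X, g x = true) ∧ (∀ y ∈ Y, g y = false)}
      = (q : ℝ≥0∞) ^ X.card * (1 - (q : ℝ≥0∞)) ^ Y.card := by
  have hset : {g : E → Bool | (∀ x ∈ X, g x = true) ∧ (∀ y ∈ Y, g y = false)}
      = Set.pi Set.univ
        (fun e => if e ∈ X then {true} else if e ∈ Y then {false} else Set.univ) := by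
    ext g
    simp only [Set.mem_setOf_eq, Set.mem_pi, Set.mem_univ, forall_true_left]
    constructor
    · rintro ⟨h1, h2⟩ e
      by_cases heX : e ∈ X
      · simp [heX, h1 e heX]
      · by_cases heY : e ∈ Y <;> simp [heX, heY, h2 e]
    · intro hg
      constructor
      · intro x hx
        have := hg x
        simpa [hx] using this
      · intro y hy
        have := hg y
        have hyX : y ∉ X := fun hyX => (Finset.disjoint_left.mp hXY hyX) hy
        simpa [hy, hyX] using this
  rw [hset, Measure.pi_pi]
  have hXu : X ⊆ Finset.univ := Finset.subset_univ X
  have hYu : Y ⊆ Finset.univ \ X := by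
    intro y hy
    simp [Finset.disjoint_left.mp hXY.symm hy]
  rw [← Finset.prod_sdiff hXu, ← Finset.prod_sdiff hYu]
  have e1 : ∀ e ∈ X, (PMF.bernoulli q h).toMeasure
      (if e ∈ X then {true} else if e ∈ Y then {false} else Set.univ) = q := by
    intro e he; simp [he, bern_true, PMF.bernoulli_apply]
  have e2 : ∀ e ∈ Y, (PMF.bernoulli q h).toMeasure
      (if e ∈ X then {true} else if e ∈ Y then {false} else Set.univ) = 1 - q := by
    intro e he
    have heX : e ∉ X := fun hx => (Finset.disjoint_left.mp hXY hx) he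
    simp [he, heX, bern_false, PMF.bernoulli_apply, ENNReal.coe_sub]
  have e3 : ∀ e ∈ (Finset.univ \ X) \ Y, (PMF.bernoulli q h).toMeasure
      (if e ∈ X then {true} else if e ∈ Y then {false} else Set.univ) = 1 := by
    intro e he
    simp only [Finset.mem_sdiff] at he
    rw [if_neg he.1.2, if_neg he.2]
    exact measure_univ
  rw [Finset.prod_congr rfl e1, Finset.prod_congr rfl e2, Finset.prod_congr rfl e3]
  simp [mul_comm, mul_assoc]

lemma pair_measure {E : Type*} [Fintype E] [DecidableEq E] (t : ℕ) (q : NNReal) (h : q ≤ 1)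
    (X Y : Finset E) (hXY : Disjoint X Y) :
    Measure.pi (fun _ : Fin t => Measure.pi (fun _ : E => (PMF.bernoulli q h).toMeasure))
      {F : Fin t → E → Bool | ∀ i, ¬ ((∀ x ∈ X, F i x = true) ∧ (∀ y ∈ Y, F i y = false))}
      = (1 - (q : ℝ≥0∞) ^ X.card * (1 - (q : ℝ≥0∞)) ^ Y.card) ^ t := by
  set ν : Measure (E → Bool) := Measure.pi (fun _ : E => (PMF.bernoulli q h).toMeasure) with hν
  haveI : IsProbabilityMeasure ν := MeasureTheory.Measure.pi.instIsProbabilityMeasure _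
  set B : Set (E → Bool) := {g : E → Bool | (∀ x ∈ X, g x = true) ∧ (∀ y ∈ Y, g y = false)}
    with hB
  have hset : {F : Fin t → E → Bool |
        ∀ i, ¬ ((∀ x ∈ X, F i x = true) ∧ (∀ y ∈ Y, F i y = false))}
      = Set.pi Set.univ (fun _ : Fin t => Bᶜ) := by
    ext F
    simp [hB, Set.mem_pi]
  rw [hset, Measure.pi_pi]
  have hcompl : ν Bᶜ = 1 - q ^ X.card * (1 - q) ^ Y.card := by
    rw [measure_compl (B.toFinite.countable.measurableSet) (measure_ne_top _ B),
      measure_univ, hν, hB, good_measure q h X Y hXY]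
  rw [hcompl]
  simp

lemma numeric (n k p t : ℕ) (c : ℝ) (hn2 : 2 ≤ n) (hp : 1 ≤ p) (hpk : p ≤ k) (hc : 1 ≤ c)
    (hq : (p : ℝ) / (c * k) ≤ 1)
    (ht : ((c * k) ^ k / ((p : ℝ) ^ p * (c * k - p) ^ (k - p))) * (k + 1) * Real.log n ≤ t) :
    (1 - ((p:ℝ)/(c*k)) ^ p * (1 - (p:ℝ)/(c*k)) ^ (k - p)) ^ t ≤ 1 / (n:ℝ) ^ (k+1) := by
  have hk : 1 ≤ k := le_trans hp hpk
  have hk1 : (1:ℝ) ≤ k := by exact_mod_cast hk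
  have hck : (0:ℝ) < c * k := by nlinarith
  set qr : ℝ := (p:ℝ)/(c*k) with hqr
  have hqr0 : 0 < qr := div_pos (by exact_mod_cast hp) hck
  have hqr1 : qr ≤ 1 := hq
  set r : ℝ := qr ^ p * (1 - qr) ^ (k - p) with hrdef
  have hr0 : 0 < r := by
    rcases eq_or_lt_of_le hpk with hkp | hkp
    · rw [hrdef, ← hkp, Nat.sub_self, pow_zero, mul_one]
      exact pow_pos hqr0 _
    · have hpk' : (p:ℝ) < k := by exact_mod_cast hkp
      have h1 : (k:ℝ) ≤ c * k := by nlinarith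
      have h2 : 0 < 1 - qr := by
        rw [hqr, sub_pos]
        exact (div_lt_one hck).mpr (by linarith)
      exact mul_pos (pow_pos hqr0 _) (pow_pos h2 _)
  have h1qnn : (0:ℝ) ≤ 1 - qr := by
    rw [hqr, sub_nonneg]; exact hq
  have hr1 : r ≤ 1 := by
    rw [hrdef]
    have h1 : qr ^ p ≤ 1 := pow_le_one₀ hqr0.le hqr1
    have h2 : (1-qr)^(k-p) ≤ 1 := pow_le_one₀ h1qnn (by linarith)
    nlinarith [pow_nonneg hqr0.le p, pow_nonneg h1qnn (k-p)]
  have hckk : (c*k)^p * (c*k)^(k-p) = (c*k)^k := by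
    rw [← pow_add, Nat.add_sub_cancel' hpk]
  have hreq : r = ((p:ℝ)^p * (c*k - p)^(k-p)) / (c*k)^k := by
    rw [hrdef, hqr]
    have h1 : (1 - (p:ℝ)/(c*k)) = (c*k - p)/(c*k) := by field_simp
    rw [h1, div_pow, div_pow, div_mul_div_comm, hckk]
  have hid : ((c * k) ^ k / ((p : ℝ) ^ p * (c * k - p) ^ (k - p))) = 1 / r := by
    rw [hreq, one_div_div]
  rw [hid] at ht
  have hlog : 0 < Real.log n := Real.log_pos (by exact_mod_cast hn2)
  have hrt : ((k:ℝ)+1) * Real.log n ≤ r * t := by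
    have h := mul_le_mul_of_nonneg_left ht hr0.le
    calc ((k:ℝ)+1) * Real.log n = r * (1 / r * (↑k + 1) * Real.log ↑n) := by
          field_simp
      _ ≤ r * t := h
  calc (1 - r) ^ t ≤ (Real.exp (-r)) ^ t := by
        apply pow_le_pow_left₀ (by linarith)
        linarith [Real.add_one_le_exp (-r)]
    _ = Real.exp (-(r * t)) := by
        rw [← Real.exp_nat_mul]; ring_nf
    _ ≤ Real.exp (-(((k:ℝ)+1) * Real.log n)) := by
        apply Real.exp_le_exp.mpr; linarith
    _ = 1 / (n:ℝ)^(k+1) := by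
        rw [Real.exp_neg]
        have h2 : ((k:ℝ)+1) = ((k+1 : ℕ) : ℝ) := by push_cast; ring
        rw [h2, Real.exp_nat_mul, Real.exp_log (by positivity), one_div]

lemma ofReal_one_sub (a : ℝ) (ha : 0 ≤ a) :
    1 - ENNReal.ofReal a = ENNReal.ofReal (1 - a) := by
  rw [ENNReal.ofReal_sub _ ha, ENNReal.ofReal_one]

/-- Union bound: with `t` i.i.d. random subsets as before, the probability that there
exist a `p`-subset `X` and a `(k-p)`-subset `Y` of `E \ X` such that no `F i` contains
`X` and is disjoint from `Y` is at most `1/n`. -/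
theorem stmt3 {E : Type*} [Fintype E] (n k p t : ℕ) (c : ℝ)
    (hn : Fintype.card E = n) (hn2 : 2 ≤ n)
    (hp : 1 ≤ p) (hpk : p ≤ k) (hc : 1 ≤ c) (hq : (p : ℝ) / (c * k) ≤ 1)
    (ht : ((c * k) ^ k / ((p : ℝ) ^ p * (c * k - p) ^ (k - p))) * (k + 1) * Real.log n
      ≤ t) :
    Measure.pi (fun _ : Fin t => Measure.pi (fun _ : E =>
        (PMF.bernoulli (Real.toNNReal ((p : ℝ) / (c * k)))
          (Real.toNNReal_le_one.mpr hq)).toMeasure))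
      {F : Fin t → E → Bool | ∃ X Y : Finset E, X.card = p ∧ Y.card = k - p ∧
        Disjoint X Y ∧
        ∀ i, ¬ ((∀ x ∈ X, F i x = true) ∧ (∀ y ∈ Y, F i y = false))}
      ≤ ENNReal.ofReal (1 / n) := by
  classical
  have hk : 1 ≤ k := le_trans hp hpk
  have hk1 : (1:ℝ) ≤ k := by exact_mod_cast hk
  have hck : (0:ℝ) < c * k := by nlinarith
  have hqr0 : (0:ℝ) ≤ (p:ℝ)/(c*k) := div_nonneg (by positivity) hck.le
  have h1q : (0:ℝ) ≤ 1 - (p:ℝ)/(c*k) := by linarith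
  set q : NNReal := Real.toNNReal ((p : ℝ) / (c * k)) with hqd
  have hq1 : q ≤ 1 := Real.toNNReal_le_one.mpr hq
  have hqE : (q : ℝ≥0∞) = ENNReal.ofReal ((p : ℝ) / (c * k)) := by rw [hqd]; rfl
  set μ : Measure (Fin t → E → Bool) :=
    Measure.pi (fun _ : Fin t => Measure.pi (fun _ : E =>
      (PMF.bernoulli (Real.toNNReal ((p : ℝ) / (c * k)))
        (Real.toNNReal_le_one.mpr hq)).toMeasure)) with hμ
  -- per-pair bound
  have hbound : ∀ (X Y : Finset E), X.card = p → Y.card = k - p → Disjoint X Y →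
      μ {F : Fin t → E → Bool |
          ∀ i, ¬ ((∀ x ∈ X, F i x = true) ∧ (∀ y ∈ Y, F i y = false))}
        ≤ ENNReal.ofReal (1 / (n:ℝ)^(k+1)) := by
    intro X Y hX hY hXY
    rw [hμ, pair_measure t q hq1 X Y hXY, hX, hY]
    have e1 : (q : ℝ≥0∞) ^ p * (1 - (q : ℝ≥0∞)) ^ (k - p)
        = ENNReal.ofReal (((p:ℝ)/(c*k)) ^ p * (1 - (p:ℝ)/(c*k)) ^ (k-p)) := by
      rw [hqE, ofReal_one_sub _ hqr0, ← ENNReal.ofReal_pow hqr0, ← ENNReal.ofReal_pow h1q,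
        ← ENNReal.ofReal_mul (by positivity)]
    have hrnn : (0:ℝ) ≤ ((p:ℝ)/(c*k)) ^ p * (1 - (p:ℝ)/(c*k)) ^ (k-p) := by positivity
    rw [e1, ofReal_one_sub _ hrnn, ← ENNReal.ofReal_pow (by
      have h1 : ((p:ℝ)/(c*k)) ^ p ≤ 1 := pow_le_one₀ hqr0 hq
      have h2 : (1 - (p:ℝ)/(c*k)) ^ (k-p) ≤ 1 := pow_le_one₀ h1q (by linarith)
      nlinarith [pow_nonneg hqr0 p, pow_nonneg h1q (k-p)])]
    exact ENNReal.ofReal_le_ofReal (numeric n k p t c hn2 hp hpk hc hq ht)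
  -- the family of pairs
  set S : Finset (Finset E × Finset E) :=
    Finset.univ.filter (fun s => s.1.card = p ∧ s.2.card = k - p ∧ Disjoint s.1 s.2) with hS
  have hsub : {F : Fin t → E → Bool | ∃ X Y : Finset E, X.card = p ∧ Y.card = k - p ∧
        Disjoint X Y ∧
        ∀ i, ¬ ((∀ x ∈ X, F i x = true) ∧ (∀ y ∈ Y, F i y = false))}
      ⊆ ⋃ s ∈ S, {F : Fin t → E → Bool |
          ∀ i, ¬ ((∀ x ∈ s.1, F i x = true) ∧ (∀ y ∈ s.2, F i y = false))} := by
    rintro F ⟨X, Y, h1, h2, h3, h4⟩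
    exact Set.mem_biUnion (show (X, Y) ∈ S by simp [hS, h1, h2, h3]) h4
  have hScard : S.card ≤ n ^ k := by
    have hsub2 : S ⊆ (Finset.univ.filter (fun X : Finset E => X.card = p)) ×ˢ
        (Finset.univ.filter (fun Y : Finset E => Y.card = k - p)) := by
      intro s hs
      simp only [hS, Finset.mem_filter, Finset.mem_univ, true_and] at hs
      simp [Finset.mem_product, hs.1, hs.2.1]
    have h1 : ∀ m : ℕ, (Finset.univ.filter (fun X : Finset E => X.card = m)).card
        = n.choose m := by
      intro m
      rw [← hn, ← Finset.card_univ, ← Finset.card_powersetCard,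
        Finset.powersetCard_eq_filter, Finset.powerset_univ]
    calc S.card ≤ _ := Finset.card_le_card hsub2
      _ = n.choose p * n.choose (k-p) := by rw [Finset.card_product, h1, h1]
      _ ≤ n^p * n^(k-p) := Nat.mul_le_mul (Nat.choose_le_pow _ _) (Nat.choose_le_pow _ _)
      _ = n^k := by rw [← pow_add, Nat.add_sub_cancel' hpk]
  have hn0 : (0:ℝ) < n := by exact_mod_cast lt_of_lt_of_le Nat.zero_lt_two hn2
  calc μ _ ≤ μ (⋃ s ∈ S, {F : Fin t → E → Bool |
          ∀ i, ¬ ((∀ x ∈ s.1, F i x = true) ∧ (∀ y ∈ s.2, F i y = false))}) :=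
        measure_mono hsub
    _ ≤ ∑ s ∈ S, μ {F : Fin t → E → Bool |
          ∀ i, ¬ ((∀ x ∈ s.1, F i x = true) ∧ (∀ y ∈ s.2, F i y = false))} :=
        measure_biUnion_finset_le S _
    _ ≤ ∑ _s ∈ S, ENNReal.ofReal (1/(n:ℝ)^(k+1)) := Finset.sum_le_sum (fun s hs => by
        simp only [hS, Finset.mem_filter, Finset.mem_univ, true_and] at hs
        exact hbound s.1 s.2 hs.1 hs.2.1 hs.2.2)
    _ = (S.card : ℝ≥0∞) * ENNReal.ofReal (1/(n:ℝ)^(k+1)) := by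
        rw [Finset.sum_const, nsmul_eq_mul]
    _ ≤ ((n^k : ℕ) : ℝ≥0∞) * ENNReal.ofReal (1/(n:ℝ)^(k+1)) := by
        gcongr
    _ = ENNReal.ofReal ((n:ℝ)^k * (1/(n:ℝ)^(k+1))) := by
        rw [ENNReal.ofReal_mul (by positivity), ← ENNReal.ofReal_natCast (n^k)]
        norm_cast
    _ = ENNReal.ofReal (1 / n) := by
        congr 1
        rw [pow_succ]
        field_simp
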